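/- Let b ≥ 2 be an integer and let (g_k)_{k∈ℤ} be a uniform generator: measurable functions g_k : [0,1) → [0,∞) with ∑_{k∈ℤ} g_k(u) = 1 for every u ∈ [0,1). Define f : ℝ → [0,∞) by f(x) := g_{⌊log_b x⌋}(⟨log_b x⟩) / (x · ln b) for x > 0 and f(x) := 0 for x ≤ 0. Then ∫_ℝ f dx = 1, and any random variable X whose law has density f with respect to Lebesgue measure satisfies P(X > 0) = 1 and is base-b Benford. -/

import Mathlib

open MeasureTheory
open scoped ENNReal

/-- Given a uniform generator `(g_k)_{k ∈ ℤ}`, the function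
`f(x) = g_{⌊log_b x⌋}(⟨log_b x⟩) / (x ln b)` for `x > 0` (and `0` for `x ≤ 0`)
is a probability density, and any random variable with this density is a
positive, base-`b` Benford random variable. -/
theorem pdf_of_uniform_generator_is_benford
    {Ω : Type*} [MeasurableSpace Ω] (ℙ : Measure Ω) [IsProbabilityMeasure ℙ]
    (b : ℕ) (hb : 2 ≤ b)
    (g : ℤ → ℝ → ℝ) (hgmeas : ∀ k, Measurable (g k))
    (hgnn : ∀ k, ∀ u ∈ Set.Ico (0 : ℝ) 1, 0 ≤ g k u)
    (hgsum : ∀ u ∈ Set.Ico (0 : ℝ) 1, ∑' k : ℤ, g k u = 1)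
    (f : ℝ → ℝ)
    (hfdef : ∀ x : ℝ, f x =
      if 0 < x then g ⌊Real.logb b x⌋ (Int.fract (Real.logb b x)) / (x * Real.log b) else 0)
    (X : Ω → ℝ) (hX : Measurable X)
    (hlaw : Measure.map X ℙ = volume.withDensity (fun x => ENNReal.ofReal (f x))) :
    (∫ x, f x) = 1 ∧
    ℙ {ω | 0 < X ω} = 1 ∧
    Measure.map (fun ω => Int.fract (Real.logb b (X ω))) ℙ
      = volume.restrict (Set.Ico (0 : ℝ) 1) := by
  have hb1 : (1 : ℝ) < (b : ℝ) := by exact_mod_cast lt_of_lt_of_le one_lt_two hb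
  set c : ℝ := Real.log b with hc_def
  have hc : 0 < c := Real.log_pos hb1
  -- the substitution map
  set E : ℝ → ℝ := fun y => Real.exp (y * c) with hE_def
  have hEpos : ∀ y, 0 < E y := fun y => Real.exp_pos _
  have hlogbE : ∀ y, Real.logb b (E y) = y := by
    intro y
    rw [Real.logb, hE_def]
    simp only [Real.log_exp]
    field_simp
    exact mul_div_cancel_right₀ y hc.ne'
  have hErange : E '' Set.univ = Set.Ioi 0 := by
    rw [Set.image_univ]
    ext x
    simp only [Set.mem_range, Set.mem_Ioi]
    constructor
    · rintro ⟨y, rfl⟩; exact hEpos y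
    · intro hx
      exact ⟨Real.log x / c, by
        rw [hE_def]; simp only []
        rw [div_mul_cancel₀ _ hc.ne', Real.exp_log hx]⟩
  have hE' : ∀ y, HasDerivAt E (E y * c) y := by
    intro y
    have h1 : HasDerivAt (fun y : ℝ => y * c) c y := by
      simpa using (hasDerivAt_id y).mul_const c
    exact (Real.hasDerivAt_exp (y * c)).comp y h1
  have hEinj : Function.Injective E := by
    intro y z h
    have := Real.exp_injective h
    exact mul_right_cancel₀ hc.ne' this
  -- change of variables
  have changeVar : ∀ G : ℝ → ℝ≥0∞,
      ∫⁻ x in Set.Ioi (0 : ℝ), G x = ∫⁻ y, ENNReal.ofReal (E y * c) * G (E y) := by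
    intro G
    have h := lintegral_image_eq_lintegral_abs_det_fderiv_mul volume MeasurableSet.univ
      (fun y (_ : y ∈ Set.univ) => ((hE' y).hasDerivWithinAt).hasFDerivWithinAt)
      (hEinj.injOn) G
    rw [hErange] at h
    rw [h]
    simp only [ContinuousLinearMap.det_toSpanSingleton, Measure.restrict_univ]
    congr 1
    funext y
    rw [abs_of_pos (mul_pos (hEpos y) hc)]
  have hTmeas : Measurable (fun x : ℝ => Int.fract (Real.logb b x)) :=
    measurable_fract.comp (Real.measurable_log.div_const c)
  -- the key measure computation
  set μ : Measure ℝ := volume.withDensity (fun x => ENNReal.ofReal (f x)) with hμ_def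
  have key : ∀ s : Set ℝ, MeasurableSet s →
      μ ((fun x : ℝ => Int.fract (Real.logb b x)) ⁻¹' s) = volume (s ∩ Set.Ico (0 : ℝ) 1) := by
    intro s hs
    set A : Set ℝ := (fun x : ℝ => Int.fract (Real.logb b x)) ⁻¹' s with hA_def
    have hA : MeasurableSet A := hTmeas hs
    set F : ℝ → ℝ≥0∞ := fun x => ENNReal.ofReal (f x) with hF_def
    have hzero : ∀ x ∈ Set.Iic (0 : ℝ), A.indicator F x = 0 := by
      intro x hx
      apply Set.indicator_apply_eq_zero.mpr
      intro _
      simp only [hF_def, hfdef x, if_neg (not_lt.mpr (Set.mem_Iic.mp hx)),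
        ENNReal.ofReal_zero]
    have step1 : μ A = ∫⁻ x in Set.Ioi (0 : ℝ), A.indicator F x := by
      rw [hμ_def, withDensity_apply _ hA, ← lintegral_indicator hA,
        ← lintegral_add_compl (A.indicator F) (measurableSet_Ioi (a := (0:ℝ))).compl]
      have h2 : ∫⁻ x in (Set.Ioi (0:ℝ))ᶜ, A.indicator F x = 0 := by
        rw [Set.compl_Ioi,
          setLIntegral_congr_fun measurableSet_Iic hzero, lintegral_zero]
      rw [h2, zero_add, compl_compl]
    -- after substitution
    set Ψ : ℤ → ℝ → ℝ≥0∞ := fun k => s.indicator (fun u => ENNReal.ofReal (g k u)) with hΨ_def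
    have hΨmeas : ∀ k, Measurable (Ψ k) := fun k =>
      (ENNReal.measurable_ofReal.comp (hgmeas k)).indicator hs
    have hpoint : ∀ y, ENNReal.ofReal (E y * c) * A.indicator F (E y) = Ψ ⌊y⌋ (Int.fract y) := by
      intro y
      have hmemA : E y ∈ A ↔ Int.fract y ∈ s := by
        rw [hA_def, Set.mem_preimage, hlogbE y]
      have hfy : f (E y) = g ⌊y⌋ (Int.fract y) / (E y * c) := by
        rw [hfdef, if_pos (hEpos y), hlogbE y]
      by_cases hy : Int.fract y ∈ s
      · rw [Set.indicator_of_mem (hmemA.mpr hy), hΨ_def]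
        simp only [Set.indicator_of_mem hy]
        rw [hF_def]
        simp only [hfy]
        rw [← ENNReal.ofReal_mul (le_of_lt (mul_pos (hEpos y) hc))]
        congr 1
        rw [mul_comm, div_mul_cancel₀ _ (mul_pos (hEpos y) hc).ne']
      · rw [Set.indicator_of_notMem (fun h => hy (hmemA.mp h)), hΨ_def]
        simp only [Set.indicator_of_notMem hy, mul_zero]
    have step2 : μ A = ∫⁻ y, Ψ ⌊y⌋ (Int.fract y) := by
      rw [step1, changeVar (A.indicator F)]
      exact lintegral_congr hpoint
    -- partition into [k, k+1)
    have hcover : (⋃ k : ℤ, Set.Ico (k : ℝ) (k + 1)) = Set.univ := iUnion_Ico_intCast ℝ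
    have step3 : ∫⁻ y, Ψ ⌊y⌋ (Int.fract y)
        = ∑' k : ℤ, ∫⁻ y in Set.Ico (k : ℝ) (k + 1), Ψ ⌊y⌋ (Int.fract y) := by
      rw [← lintegral_iUnion (fun k : ℤ => measurableSet_Ico)
        (Set.pairwise_disjoint_Ico_intCast ℝ) _, hcover, Measure.restrict_univ]
    have step4 : ∀ k : ℤ, ∫⁻ y in Set.Ico (k : ℝ) (k + 1), Ψ ⌊y⌋ (Int.fract y)
        = ∫⁻ u in Set.Ico (0 : ℝ) 1, Ψ k u := by
      intro k
      have hcongr : ∀ y ∈ Set.Ico (k : ℝ) (k + 1), Ψ ⌊y⌋ (Int.fract y) = Ψ k (y - k) := by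
        intro y hy
        have hfl : ⌊y⌋ = k := by
          rw [Int.floor_eq_iff]
          exact ⟨hy.1, by exact_mod_cast hy.2⟩
        rw [hfl, Int.fract, hfl]
      rw [setLIntegral_congr_fun measurableSet_Ico hcongr]
      have hmap : Measure.map (fun u : ℝ => u + (k : ℝ)) volume = volume :=
        map_add_right_eq_self volume (k : ℝ)
      have hpre : (fun u : ℝ => u + (k : ℝ)) ⁻¹' Set.Ico (k : ℝ) (k + 1)
          = Set.Ico (0 : ℝ) 1 := by
        rw [Set.preimage_add_const_Ico]
        norm_num
      have hm : Measurable fun y : ℝ => Ψ k (y - (k : ℝ)) :=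
        (hΨmeas k).comp (measurable_sub_const _)
      calc ∫⁻ y in Set.Ico (k : ℝ) (k + 1), Ψ k (y - k)
          = ∫⁻ y in Set.Ico (k : ℝ) (k + 1), Ψ k (y - k)
            ∂(Measure.map (fun u : ℝ => u + (k : ℝ)) volume) := by rw [hmap]
        _ = ∫⁻ y, Ψ k (y - k)
            ∂(Measure.map (fun u : ℝ => u + (k : ℝ))
              (volume.restrict (Set.Ico (0 : ℝ) 1))) := by
            rw [Measure.restrict_map (measurable_add_const _) measurableSet_Ico, hpre]
        _ = ∫⁻ u in Set.Ico (0 : ℝ) 1, Ψ k (u + k - k) := by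
            rw [lintegral_map hm (measurable_add_const _)]
        _ = ∫⁻ u in Set.Ico (0 : ℝ) 1, Ψ k u := by
            congr 1; funext u; rw [add_sub_cancel_right]
    have hsummable : ∀ u ∈ Set.Ico (0 : ℝ) 1, Summable (fun k : ℤ => g k u) := by
      intro u hu
      by_contra h
      have h1 := hgsum u hu
      rw [tsum_eq_zero_of_not_summable h] at h1
      exact one_ne_zero h1.symm
    have step5 : ∫⁻ u in Set.Ico (0 : ℝ) 1, ∑' k : ℤ, Ψ k u = volume (s ∩ Set.Ico (0 : ℝ) 1) := by
      have hcongr : ∀ u ∈ Set.Ico (0 : ℝ) 1,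
          (∑' k : ℤ, Ψ k u) = s.indicator (fun _ => (1 : ℝ≥0∞)) u := by
        intro u hu
        by_cases hus : u ∈ s
        · simp only [hΨ_def, Set.indicator_of_mem hus]
          rw [← ENNReal.ofReal_tsum_of_nonneg (fun k => hgnn k u hu) (hsummable u hu),
            hgsum u hu, ENNReal.ofReal_one]
        · rw [Set.indicator_of_notMem hus, hΨ_def]
          simp only [Set.indicator_of_notMem hus]
          exact tsum_zero
      rw [setLIntegral_congr_fun measurableSet_Ico hcongr,
        lintegral_indicator hs, setLIntegral_one, Measure.restrict_apply hs,
        Set.inter_comm]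
    rw [step2, step3]
    calc ∑' k : ℤ, ∫⁻ y in Set.Ico (k : ℝ) (k + 1), Ψ ⌊y⌋ (Int.fract y)
        = ∑' k : ℤ, ∫⁻ u in Set.Ico (0 : ℝ) 1, Ψ k u := tsum_congr step4
      _ = ∫⁻ u in Set.Ico (0 : ℝ) 1, ∑' k : ℤ, Ψ k u :=
          (lintegral_tsum fun k => (hΨmeas k).aemeasurable).symm
      _ = volume (s ∩ Set.Ico (0 : ℝ) 1) := step5
  -- total mass
  have huniv : μ Set.univ = 1 := by
    have := key Set.univ MeasurableSet.univ
    simpa [Real.volume_Ico] using this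
  -- measurability of f
  have hG0 : Measurable (fun y : ℝ => g ⌊y⌋ (Int.fract y)) := by
    have huncurry : Measurable (fun p : ℝ × ℤ => g p.2 p.1) :=
      measurable_from_prod_countable_left (fun k => hgmeas k)
    exact huncurry.comp ((measurable_fract (R := ℝ)).prodMk Int.measurable_floor)
  have hfmeas : Measurable f := by
    have : f = fun x => if 0 < x then
        g ⌊Real.logb b x⌋ (Int.fract (Real.logb b x)) / (x * c) else 0 := funext hfdef
    rw [this]
    apply Measurable.ite measurableSet_Ioi
    · exact (hG0.comp (Real.measurable_log.div_const c)).div (measurable_id.mul_const c)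
    · exact measurable_const
  have hfnn : ∀ x, 0 ≤ f x := by
    intro x
    rw [hfdef]
    split_ifs with hx
    · exact div_nonneg
        (hgnn _ _ ⟨Int.fract_nonneg _, Int.fract_lt_one _⟩)
        (le_of_lt (mul_pos hx hc))
    · exact le_refl 0
  -- Goal 1
  have goal1 : (∫ x, f x) = 1 := by
    rw [integral_eq_lintegral_of_nonneg_ae (ae_of_all _ hfnn) hfmeas.aestronglyMeasurable]
    have : ∫⁻ x, ENNReal.ofReal (f x) = 1 := by
      rw [← setLIntegral_univ, ← withDensity_apply _ MeasurableSet.univ]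
      exact huniv
    rw [this, ENNReal.toReal_one]
  -- Goal 2
  have h0 : μ (Set.Iic (0 : ℝ)) = 0 := by
    rw [hμ_def, withDensity_apply _ measurableSet_Iic]
    have : ∀ x ∈ Set.Iic (0 : ℝ), ENNReal.ofReal (f x) = 0 := by
      intro x hx
      rw [hfdef, if_neg (not_lt.mpr hx), ENNReal.ofReal_zero]
    rw [setLIntegral_congr_fun measurableSet_Iic this, lintegral_zero]
  have hIoi : μ (Set.Ioi (0 : ℝ)) = 1 := by
    have := measure_add_measure_compl (μ := μ) (measurableSet_Ioi (a := (0:ℝ)))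
    rw [Set.compl_Ioi, h0, add_zero, huniv] at this
    exact this
  have goal2 : ℙ {ω | 0 < X ω} = 1 := by
    have : {ω | 0 < X ω} = X ⁻¹' Set.Ioi 0 := rfl
    rw [this, ← Measure.map_apply hX measurableSet_Ioi, hlaw]
    exact hIoi
  refine ⟨goal1, goal2, ?_⟩
  -- Goal 3
  have hcomp : (fun ω => Int.fract (Real.logb b (X ω)))
      = (fun x : ℝ => Int.fract (Real.logb b x)) ∘ X := rfl
  rw [hcomp, ← Measure.map_map hTmeas hX, hlaw]
  ext s hs
  rw [Measure.map_apply hTmeas hs, Measure.restrict_apply hs]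
  exact key s hs
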